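/- arXiv:2112.03118 — 6 statements merged into one kernel-verified Lean document; each statement's English description precedes it below -/
import Mathlib

section
/- Let p, ρ, H, E, ε, u : ℝ² → ℝ be sufficiently smooth with ρ nowhere zero, κ > 0, and suppose i = κρH_s, E satisfies i = σE for some function σ with σE = κρH_s, and the system (1/ρ)_t = u_s, u_t = -(p + κH²/2)_s, (H/ρ)_t = E_s, ε_t = -p u_s + iE/ρ holds. Then the total energy satisfies the fully divergent conservation law: (ε + u²/2 + κH²/(2ρ))_t = -[(p + κH²/2)u]_s + κ(EH)_s. -/
noncomputable def pt (f : ℝ × ℝ → ℝ) (z : ℝ × ℝ) : ℝ := fderiv ℝ f z (1, 0)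
noncomputable def ps (f : ℝ × ℝ → ℝ) (z : ℝ × ℝ) : ℝ := fderiv ℝ f z (0, 1)

lemma hfd_div {f g : ℝ × ℝ → ℝ} {f' g' : ℝ × ℝ →L[ℝ] ℝ} {z : ℝ × ℝ}
    (hf : HasFDerivAt f f' z) (hg : HasFDerivAt g g' z) (h : g z ≠ 0) :
    HasFDerivAt (fun y => f y / g y) ((g z)⁻¹ • f' + (-(f z) / g z ^ 2) • g') z := by
  have hinv : HasFDerivAt (fun y => (g y)⁻¹) (-((g z ^ 2)⁻¹ • g')) z := by
    simpa [Function.comp_def] using (hasDerivAt_inv h).comp_hasFDerivAt z hg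
  have hm := hf.mul hinv
  have heq : ((g z)⁻¹ • f' + (-(f z) / g z ^ 2) • g') =
      f z • -((g z ^ 2)⁻¹ • g') + (g z)⁻¹ • f' := by
    refine ContinuousLinearMap.ext fun v => ?_
    simp only [ContinuousLinearMap.add_apply, ContinuousLinearMap.smul_apply,
      ContinuousLinearMap.neg_apply, smul_eq_mul]
    field_simp
    ring
  rw [heq]
  simpa only [div_eq_mul_inv] using (show HasFDerivAt (fun y => f y * (g y)⁻¹) _ z from hm)

theorem stmt2 (U : Set (ℝ × ℝ)) (hU : IsOpen U)
    (p ρ H E ε u σ i : ℝ × ℝ → ℝ) (κ : ℝ) (hκ : 0 < κ)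
    (hp : ContDiffOn ℝ 2 p U) (hρ : ContDiffOn ℝ 2 ρ U)
    (hH : ContDiffOn ℝ 2 H U) (hE : ContDiffOn ℝ 2 E U)
    (hε : ContDiffOn ℝ 2 ε U) (hu : ContDiffOn ℝ 2 u U)
    (hρ0 : ∀ z ∈ U, ρ z ≠ 0)
    (hi : ∀ z ∈ U, i z = κ * ρ z * ps H z)
    (hiE : ∀ z ∈ U, i z = σ z * E z)
    (hσE : ∀ z ∈ U, σ z * E z = κ * ρ z * ps H z)
    (e1 : ∀ z ∈ U, pt (fun y => 1 / ρ y) z = ps u z)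
    (e2 : ∀ z ∈ U, pt u z = -(ps (fun y => p y + κ * H y ^ 2 / 2) z))
    (e3 : ∀ z ∈ U, pt (fun y => H y / ρ y) z = ps E z)
    (e4 : ∀ z ∈ U, pt ε z = -(p z * ps u z) + i z * E z / ρ z) :
    ∀ z ∈ U, pt (fun y => ε y + u y ^ 2 / 2 + κ * H y ^ 2 / (2 * ρ y)) z =
      -(ps (fun y => (p y + κ * H y ^ 2 / 2) * u y) z) +
        κ * ps (fun y => E y * H y) z := by
  intro z hz
  have hz' : U ∈ nhds z := hU.mem_nhds hz
  have one_le : (2 : WithTop ℕ∞) ≠ 0 := by norm_num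
  have dp : DifferentiableAt ℝ p z := (hp.contDiffAt hz').differentiableAt one_le
  have dρ : DifferentiableAt ℝ ρ z := (hρ.contDiffAt hz').differentiableAt one_le
  have dH : DifferentiableAt ℝ H z := (hH.contDiffAt hz').differentiableAt one_le
  have dE : DifferentiableAt ℝ E z := (hE.contDiffAt hz').differentiableAt one_le
  have dε : DifferentiableAt ℝ ε z := (hε.contDiffAt hz').differentiableAt one_le
  have du : DifferentiableAt ℝ u z := (hu.contDiffAt hz').differentiableAt one_le
  have hρz : ρ z ≠ 0 := hρ0 z hz
  have h2ρ : (2 : ℝ) * ρ z ≠ 0 := mul_ne_zero two_ne_zero hρz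
  have E1 := e1 z hz
  have E2 := e2 z hz
  have E3 := e3 z hz
  have E4 := e4 z hz
  have Hi := hi z hz
  simp only [pt, ps, pow_two] at E1 E2 E3 E4 Hi ⊢
  -- e1: derivative of 1/ρ
  have b1 : HasFDerivAt (fun y => 1 / ρ y) _ z :=
    hfd_div (hasFDerivAt_const (1 : ℝ) z) dρ.hasFDerivAt hρz
  rw [b1.fderiv] at E1
  simp only [ContinuousLinearMap.add_apply, ContinuousLinearMap.smul_apply,
    fderiv_const, Pi.zero_apply, ContinuousLinearMap.zero_apply, smul_eq_mul,
    mul_zero, zero_add, one_mul] at E1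
  -- e2: derivative of p + κH²/2
  have b2 : HasFDerivAt (fun y => p y + κ * (H y * H y) / 2) _ z :=
    dp.hasFDerivAt.add
      (hfd_div ((dH.hasFDerivAt.mul dH.hasFDerivAt).const_mul κ)
        (hasFDerivAt_const (2 : ℝ) z) two_ne_zero)
  rw [b2.fderiv] at E2
  simp only [ContinuousLinearMap.add_apply, ContinuousLinearMap.smul_apply,
    fderiv_const, Pi.zero_apply, ContinuousLinearMap.zero_apply, smul_eq_mul,
    mul_zero, add_zero, zero_add] at E2
  -- e3: derivative of H/ρ
  have b3 : HasFDerivAt (fun y => H y / ρ y) _ z :=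
    hfd_div dH.hasFDerivAt dρ.hasFDerivAt hρz
  rw [b3.fderiv] at E3
  simp only [ContinuousLinearMap.add_apply, ContinuousLinearMap.smul_apply,
    smul_eq_mul] at E3
  -- LHS derivative
  have bL : HasFDerivAt
      (fun y => ε y + u y * u y / 2 + κ * (H y * H y) / (2 * ρ y)) _ z :=
    (dε.hasFDerivAt.add
      (hfd_div (du.hasFDerivAt.mul du.hasFDerivAt) (hasFDerivAt_const (2 : ℝ) z)
        two_ne_zero)).add
      (hfd_div ((dH.hasFDerivAt.mul dH.hasFDerivAt).const_mul κ)
        (dρ.hasFDerivAt.const_mul 2) h2ρ)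
  rw [bL.fderiv]
  -- RHS derivatives
  have bR1 : HasFDerivAt (fun y => (p y + κ * (H y * H y) / 2) * u y) _ z :=
    b2.mul du.hasFDerivAt
  rw [bR1.fderiv]
  have bR2 : HasFDerivAt (fun y => E y * H y) _ z :=
    dE.hasFDerivAt.mul dH.hasFDerivAt
  rw [bR2.fderiv]
  simp only [ContinuousLinearMap.add_apply, ContinuousLinearMap.smul_apply,
    fderiv_const, Pi.zero_apply, ContinuousLinearMap.zero_apply, smul_eq_mul,
    mul_zero, add_zero, zero_add]
  -- scalar bookkeeping
  set ρt := fderiv ℝ ρ z (1, 0) with hρtdef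
  set Ht := fderiv ℝ H z (1, 0) with hHtdef
  set εt := fderiv ℝ ε z (1, 0) with hεtdef
  set ut := fderiv ℝ u z (1, 0) with hutdef
  set Ps := fderiv ℝ p z (0, 1) with hPsdef
  set Hs := fderiv ℝ H z (0, 1) with hHsdef
  set Es := fderiv ℝ E z (0, 1) with hEsdef
  set us := fderiv ℝ u z (0, 1) with husdef
  rw [Hi] at E4
  field_simp at E1 E3
  rw [E2, E4]
  field_simp
  linear_combination (-2*κ*H z^2) * E1 + (4*κ*H z) * E3
end

section
/- Suppose ρ, u, H, E : ℝ² → ℝ are differentiable with ρ nowhere zero, and satisfy (H/ρ)_t = E_s together with the conductivity relation E = H_s (i.e. σE = ρH_s with σ = ρ). Then the additional conservation law (sH/ρ)_t + (H - sE)_s = 0 holds identically, where s denotes the second coordinate. -/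
theorem stmt3 (U : Set (ℝ × ℝ)) (hU : IsOpen U)
    (ρ u H E : ℝ × ℝ → ℝ)
    (hρ : ContDiffOn ℝ 1 ρ U) (hu : ContDiffOn ℝ 1 u U)
    (hH : ContDiffOn ℝ 1 H U) (hE : ContDiffOn ℝ 1 E U)
    (hρ0 : ∀ z ∈ U, ρ z ≠ 0)
    (e1 : ∀ z ∈ U, pt (fun y => H y / ρ y) z = ps E z)
    (e2 : ∀ z ∈ U, E z = ps H z) :
    ∀ z ∈ U, pt (fun y => y.2 * H y / ρ y) z +
      ps (fun y => H y - y.2 * E y) z = 0 := by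
  intro z hz
  have hzn : U ∈ nhds z := hU.mem_nhds hz
  have dρ : DifferentiableAt ℝ ρ z := (hρ.contDiffAt hzn).differentiableAt one_ne_zero
  have dH : DifferentiableAt ℝ H z := (hH.contDiffAt hzn).differentiableAt one_ne_zero
  have dE : DifferentiableAt ℝ E z := (hE.contDiffAt hzn).differentiableAt one_ne_zero
  have dq : DifferentiableAt ℝ (fun y => H y / ρ y) z := by
    simp only [div_eq_mul_inv]
    exact dH.mul (dρ.inv (hρ0 z hz))
  have dsnd : DifferentiableAt ℝ (fun y : ℝ × ℝ => y.2) z := differentiableAt_snd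
  have h1 : pt (fun y => y.2 * H y / ρ y) z = z.2 * pt (fun y => H y / ρ y) z := by
    have heq : (fun y : ℝ × ℝ => y.2 * H y / ρ y) = fun y => y.2 * (H y / ρ y) :=
      funext fun y => mul_div_assoc _ _ _
    rw [heq]
    unfold pt
    rw [fderiv_fun_mul dsnd dq]
    simp [fderiv_snd]
  have h2 : ps (fun y => H y - y.2 * E y) z = ps H z - (z.2 * ps E z + E z) := by
    unfold ps
    rw [fderiv_fun_sub (g := fun y => y.2 * E y) dH (dsnd.mul dE), fderiv_fun_mul dsnd dE]
    simp [fderiv_snd]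
  rw [h1, h2, e1 z hz, ← e2 z hz]
  ring
end

section
/- Let ρ̌, ρ, ρ̂ be nonzero reals and P, P̌ reals satisfying the γ = 3 discrete energy relation: ρ·P/(ρ̂·(ρ̂ + ρ)) − ρ̌·P̌/(ρ·(ρ + ρ̌)) = −P̌·(1/ρ − 1/ρ̌). Then 2P̌/(ρ·ρ̌·(ρ + ρ̌)) = 2P/(ρ̂·ρ·(ρ̂ + ρ)); that is, the discrete entropy 2p̌^{(α)}/(ρρ̌(ρ+ρ̌)) is conserved between consecutive time layers. -/
theorem stmt9 (rDn ρ rUp : ℝ) (hrDn : rDn ≠ 0) (hρ : ρ ≠ 0) (hrUp : rUp ≠ 0)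
    (h1 : rUp + ρ ≠ 0) (h2 : ρ + rDn ≠ 0)
    (P Pdn : ℝ)
    (h : ρ * P / (rUp * (rUp + ρ)) - rDn * Pdn / (ρ * (ρ + rDn)) =
      -(Pdn * (1 / ρ - 1 / rDn))) :
    2 * Pdn / (ρ * rDn * (ρ + rDn)) = 2 * P / (rUp * ρ * (rUp + ρ)) := by
  field_simp at h ⊢
  have key : ρ ^ 3 * (P * rDn * (ρ + rDn)) = ρ ^ 3 * (Pdn * rUp * (rUp + ρ)) := by
    linear_combination ρ * h
  have key2 := mul_left_cancel₀ (pow_ne_zero 3 hρ) key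
  linear_combination (-1) * key2
end

section
/- Let γ ≥ 2 be a natural number, ρ̌, ρ, ρ̂ positive reals, and P, P̌ reals. Define D(a,b) := ∑_{k=0}^{γ-2} a^{γ-k-1} b^{k-γ+2} for positive reals a, b (so D(ρ̂,ρ) and D(ρ,ρ̌) are well-defined). Suppose the discrete energy relation P/D(ρ̂,ρ) − P̌/D(ρ,ρ̌) = −P̌·(1/ρ − 1/ρ̌) holds. Then (γ−1)·P̌ / ∑_{k=0}^{γ-2} ρ^{γ-k-1} ρ̌^{k+1} = (γ−1)·P / ∑_{k=0}^{γ-2} ρ̂^{γ-k-1} ρ^{k+1}, i.e. the general discrete entropy functional is exactly conserved between consecutive time layers. -/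
theorem stmt10 (γ : ℕ) (hγ : 2 ≤ γ)
    (rDn ρ rUp : ℝ) (hrDn : 0 < rDn) (hρ : 0 < ρ) (hrUp : 0 < rUp)
    (P Pdn : ℝ)
    (h : P / (∑ k ∈ Finset.range (γ - 1),
          rUp ^ ((γ : ℤ) - k - 1) * ρ ^ ((k : ℤ) - γ + 2)) -
        Pdn / (∑ k ∈ Finset.range (γ - 1),
          ρ ^ ((γ : ℤ) - k - 1) * rDn ^ ((k : ℤ) - γ + 2)) =
      -(Pdn * (1 / ρ - 1 / rDn))) :
    ((γ : ℝ) - 1) * Pdn /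
        (∑ k ∈ Finset.range (γ - 1), ρ ^ ((γ : ℤ) - k - 1) * rDn ^ ((k : ℤ) + 1)) =
      ((γ : ℝ) - 1) * P /
        (∑ k ∈ Finset.range (γ - 1), rUp ^ ((γ : ℤ) - k - 1) * ρ ^ ((k : ℤ) + 1)) := by
  obtain ⟨n, rfl⟩ : ∃ n, γ = n + 2 := ⟨γ - 2, by omega⟩
  have hm : n + 2 - 1 = n + 1 := rfl
  set m := n + 1 with hmdef
  -- rewrite the natural-power sums
  have cast1 : ∀ k, k < m → ((n + 2 : ℕ) : ℤ) - k - 1 = ((m - k : ℕ) : ℤ) := by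
    intro k hk; omega
  have cast2 : ∀ k : ℕ, (k : ℤ) + 1 = ((k + 1 : ℕ) : ℤ) := by intro k; push_cast; ring
  have eS : ∀ a b : ℝ, 0 < b → ∑ k ∈ Finset.range m, a ^ (((n+2:ℕ) : ℤ) - k - 1) * b ^ ((k : ℤ) + 1)
      = ∑ k ∈ Finset.range m, a ^ (m - k) * b ^ (k + 1) := by
    intro a b hb
    refine Finset.sum_congr rfl fun k hk => ?_
    rw [Finset.mem_range] at hk
    rw [cast1 k hk, cast2 k, zpow_natCast, zpow_natCast]
  have eD : ∀ a b : ℝ, 0 < b → ∑ k ∈ Finset.range m, a ^ (((n+2:ℕ) : ℤ) - k - 1) * b ^ ((k : ℤ) - ((n+2:ℕ):ℤ) + 2)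
      = (∑ k ∈ Finset.range m, a ^ (m - k) * b ^ (k + 1)) / b ^ m := by
    intro a b hb
    rw [Finset.sum_div]
    refine Finset.sum_congr rfl fun k hk => ?_
    rw [Finset.mem_range] at hk
    have hb' : b ≠ 0 := hb.ne'
    rw [show ((k : ℤ) - ((n+2:ℕ):ℤ) + 2) = ((k+1:ℕ):ℤ) - ((m:ℕ):ℤ) by push_cast; omega,
      zpow_sub₀ hb', zpow_natCast, zpow_natCast,
      cast1 k hk, zpow_natCast, mul_div_assoc]
  rw [hm] at h ⊢
  rw [eD rUp ρ hρ, eD ρ rDn hrDn] at h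
  rw [eS ρ rDn hrDn, eS rUp ρ hρ]
  rw [div_div_eq_mul_div, div_div_eq_mul_div] at h
  set S1 : ℝ := ∑ k ∈ Finset.range m, rUp ^ (m - k) * ρ ^ (k + 1) with hS1
  set S2 : ℝ := ∑ k ∈ Finset.range m, ρ ^ (m - k) * rDn ^ (k + 1) with hS2
  have hS1pos : 0 < S1 := Finset.sum_pos (fun k _ => by positivity)
    ⟨0, Finset.mem_range.2 (Nat.succ_pos n)⟩
  have hS2pos : 0 < S2 := Finset.sum_pos (fun k _ => by positivity)
    ⟨0, Finset.mem_range.2 (Nat.succ_pos n)⟩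
  have key : S2 * (rDn - ρ) = ρ * rDn * (rDn ^ m - ρ ^ m) := by
    have geom := geom_sum₂_mul rDn ρ m
    have e : S2 = ρ * rDn * ∑ i ∈ Finset.range m, rDn ^ i * ρ ^ (m - 1 - i) := by
      rw [hS2, Finset.mul_sum]
      refine Finset.sum_congr rfl fun k hk => ?_
      rw [Finset.mem_range] at hk
      rw [show m - k = (m - 1 - k) + 1 by omega]
      ring
    rw [e, mul_assoc, geom]
  have hS1ne := hS1pos.ne'
  have hS2ne := hS2pos.ne'
  have hmain : Pdn * S1 = P * S2 := by
    field_simp at h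
    have h5 : ρ * rDn * ρ ^ m * (P * S2 - Pdn * S1) = 0 := by
      linear_combination h - Pdn * S1 * key
    have h6 : P * S2 - Pdn * S1 = 0 := by
      rcases mul_eq_zero.mp h5 with h7 | h7
      · exact absurd h7 (by positivity)
      · exact h7
    linarith
  rw [div_eq_div_iff hS2ne hS1ne]
  push_cast
  linear_combination ((n : ℝ) + 1) * hmain
end

section
/- Let ρ̌, ρ, ρ̂ be positive reals and P, P̌ reals satisfying the γ = 5/3 discrete energy relation: P·(ρ̂^{2/3} + (ρρ̂)^{1/3} + ρ^{2/3})/(ρ^{1/3} ρ̂ (ρ̂^{1/3} + ρ^{1/3})) − P̌·(ρ^{2/3} + (ρ̌ρ)^{1/3} + ρ̌^{2/3})/(ρ̌^{1/3} ρ (ρ^{1/3} + ρ̌^{1/3})) = −P̌·(1/ρ − 1/ρ̌). Then (2/3)·P̌·(ρ̌^{2/3} + (ρρ̌)^{1/3} + ρ^{2/3})/(ρρ̌(ρ̌^{1/3} + ρ^{1/3})) = (2/3)·P·(ρ^{2/3} + (ρ̂ρ)^{1/3} + ρ̂^{2/3})/(ρ̂ρ(ρ^{1/3} + ρ̂^{1/3}));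 i.e. the discrete entropy for γ = 5/3 is conserved between consecutive time layers. -/
open Real

theorem key13 (a b c P Pdn : ℝ) (ha : 0 < a) (hb : 0 < b) (hc : 0 < c)
    (h : P*(c^2+b*c+b^2)/(b*c^3*(c+b)) - Pdn*(b^2+a*b+a^2)/(a*b^3*(b+a)) = -(Pdn*(1/b^3-1/a^3))) :
    2/3*Pdn*(a^2+b*a+b^2)/(b^3*a^3*(a+b)) = 2/3*P*(b^2+c*b+c^2)/(c^3*b^3*(b+c)) := by
  have hab : (0:ℝ) < a + b := by linarith
  have hbc : (0:ℝ) < b + c := by linarith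
  field_simp at h ⊢
  have hne : a * b ^ 3 ≠ 0 := by positivity
  have h3 : a * b ^ 3 *
      (P*(c^2+b*c+b^2)*(a^3*b^3*(b+a)) - Pdn*(b^3*c^3)*(c+b)*(a^2+a*b+b^2)) = 0 := by
    linear_combination (a*b^4) * h
  have h2 := (mul_eq_zero.mp h3).resolve_left hne
  have hb3 : b ^ 3 ≠ 0 := by positivity
  have h4 : P*(c^2+b*c+b^2)*(a^3*(b+a)) - Pdn*c^3*(c+b)*(a^2+a*b+b^2) = 0 :=
    (mul_eq_zero.mp (by linear_combination h2 :
      b^3 * (P*(c^2+b*c+b^2)*(a^3*(b+a)) - Pdn*c^3*(c+b)*(a^2+a*b+b^2)) = 0)).resolve_left hb3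
  linear_combination (-1 : ℝ) * h4

theorem stmt13 (rDn ρ rUp : ℝ) (hrDn : 0 < rDn) (hρ : 0 < ρ) (hrUp : 0 < rUp)
    (P Pdn : ℝ)
    (h : P * (rUp ^ ((2 : ℝ) / 3) + (ρ * rUp) ^ ((1 : ℝ) / 3) + ρ ^ ((2 : ℝ) / 3)) /
          (ρ ^ ((1 : ℝ) / 3) * rUp * (rUp ^ ((1 : ℝ) / 3) + ρ ^ ((1 : ℝ) / 3))) -
        Pdn * (ρ ^ ((2 : ℝ) / 3) + (rDn * ρ) ^ ((1 : ℝ) / 3) + rDn ^ ((2 : ℝ) / 3)) /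
          (rDn ^ ((1 : ℝ) / 3) * ρ * (ρ ^ ((1 : ℝ) / 3) + rDn ^ ((1 : ℝ) / 3))) =
      -(Pdn * (1 / ρ - 1 / rDn))) :
    2 / 3 * Pdn * (rDn ^ ((2 : ℝ) / 3) + (ρ * rDn) ^ ((1 : ℝ) / 3) + ρ ^ ((2 : ℝ) / 3)) /
        (ρ * rDn * (rDn ^ ((1 : ℝ) / 3) + ρ ^ ((1 : ℝ) / 3))) =
      2 / 3 * P * (ρ ^ ((2 : ℝ) / 3) + (rUp * ρ) ^ ((1 : ℝ) / 3) + rUp ^ ((2 : ℝ) / 3)) /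
        (rUp * ρ * (ρ ^ ((1 : ℝ) / 3) + rUp ^ ((1 : ℝ) / 3))) := by
  have cube : ∀ x : ℝ, 0 < x → x = (x ^ ((1 : ℝ) / 3)) ^ 3 := by
    intro x hx
    rw [← Real.rpow_natCast (x ^ ((1 : ℝ) / 3)) 3, ← Real.rpow_mul hx.le]
    norm_num
  obtain ⟨a, ha, ha3⟩ : ∃ a : ℝ, 0 < a ∧ rDn = a ^ 3 :=
    ⟨rDn ^ ((1 : ℝ) / 3), rpow_pos_of_pos hrDn _, cube rDn hrDn⟩
  obtain ⟨b, hb, hb3⟩ : ∃ b : ℝ, 0 < b ∧ ρ = b ^ 3 :=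
    ⟨ρ ^ ((1 : ℝ) / 3), rpow_pos_of_pos hρ _, cube ρ hρ⟩
  obtain ⟨c, hc, hc3⟩ : ∃ c : ℝ, 0 < c ∧ rUp = c ^ 3 :=
    ⟨rUp ^ ((1 : ℝ) / 3), rpow_pos_of_pos hrUp _, cube rUp hrUp⟩
  subst ha3 hb3 hc3
  have r1 : ∀ x : ℝ, 0 < x → (x ^ 3) ^ ((1 : ℝ) / 3) = x := by
    intro x hx
    rw [← Real.rpow_natCast x 3, ← Real.rpow_mul hx.le]
    norm_num
  have r2 : ∀ x : ℝ, 0 < x → (x ^ 3) ^ ((2 : ℝ) / 3) = x ^ 2 := by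
    intro x hx
    rw [← Real.rpow_natCast x 3, ← Real.rpow_mul hx.le]
    rw [show ((3 : ℕ) : ℝ) * (2 / 3) = ((2 : ℕ) : ℝ) by norm_num, Real.rpow_natCast]
  have rab : (b ^ 3 * a ^ 3) ^ ((1 : ℝ) / 3) = b * a := by
    rw [← mul_pow, r1 _ (by positivity)]
  have rbc : (b ^ 3 * c ^ 3) ^ ((1 : ℝ) / 3) = b * c := by
    rw [← mul_pow, r1 _ (by positivity)]
  have rba : (a ^ 3 * b ^ 3) ^ ((1 : ℝ) / 3) = a * b := by
    rw [← mul_pow, r1 _ (by positivity)]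
  have rcb : (c ^ 3 * b ^ 3) ^ ((1 : ℝ) / 3) = c * b := by
    rw [← mul_pow, r1 _ (by positivity)]
  rw [r1 a ha, r1 b hb, r1 c hc, r2 a ha, r2 b hb, r2 c hc, rbc, rba] at h
  rw [r1 a ha, r1 b hb, r1 c hc, r2 a ha, r2 b hb, r2 c hc, rab, rcb]
  have hh : P*(c^2+b*c+b^2)/(b*c^3*(c+b)) - Pdn*(b^2+a*b+a^2)/(a*b^3*(b+a))
      = -(Pdn*(1/b^3-1/a^3)) := by linear_combination h
  have := key13 a b c P Pdn ha hb hc hh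
  linear_combination this
end

section
/- Let γ > 1, S ≠ 0, H⁰ ≠ 0 be real constants, and let ρ, u, v, w, H^y, H^z : ℝ² → ℝ be C² with ρ > 0, satisfying: p = S·ρ^γ, (1/ρ)_t = u_s, u_t = −(p + ((H^y)² + (H^z)²)/2)_s, v_t = H⁰ H^y_s, w_t = H⁰ H^z_s, (H^y/ρ)_t = H⁰ v_s, (H^z/ρ)_t = H⁰ w_s. Then the additional conservation law (u/ρ + (v H^y + w H^z)/(H⁰ ρ))_t + (γS/(γ−1)·ρ^{γ−1} − (u² + v² + w²)/2)_s = 0 holds identically. -/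
open Real

private lemma hasFDerivAt_sq {f : ℝ × ℝ → ℝ} {f' : (ℝ × ℝ) →L[ℝ] ℝ} {x : ℝ × ℝ}
    (hf : HasFDerivAt f f' x) : HasFDerivAt (fun y => f y ^ 2) ((2 * f x) • f') x := by
  have h := hf.mul hf
  simpa [pow_two, two_mul, add_smul, Pi.mul_def] using h

set_option maxHeartbeats 2000000 in
theorem stmt16 (U : Set (ℝ × ℝ)) (hU : IsOpen U)
    (γ S H0 : ℝ) (hγ : 1 < γ) (hS : S ≠ 0) (hH0 : H0 ≠ 0)
    (ρ u v w Hy Hz p : ℝ × ℝ → ℝ)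
    (hρ : ContDiffOn ℝ 2 ρ U) (hu : ContDiffOn ℝ 2 u U)
    (hv : ContDiffOn ℝ 2 v U) (hw : ContDiffOn ℝ 2 w U)
    (hHy : ContDiffOn ℝ 2 Hy U) (hHz : ContDiffOn ℝ 2 Hz U)
    (hρ0 : ∀ z ∈ U, 0 < ρ z)
    (hpdef : ∀ z ∈ U, p z = S * ρ z ^ γ)
    (e1 : ∀ z ∈ U, pt (fun y => 1 / ρ y) z = ps u z)
    (e2 : ∀ z ∈ U, pt u z =
      -(ps (fun y => p y + (Hy y ^ 2 + Hz y ^ 2) / 2) z))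
    (e3 : ∀ z ∈ U, pt v z = H0 * ps Hy z)
    (e4 : ∀ z ∈ U, pt w z = H0 * ps Hz z)
    (e5 : ∀ z ∈ U, pt (fun y => Hy y / ρ y) z = H0 * ps v z)
    (e6 : ∀ z ∈ U, pt (fun y => Hz y / ρ y) z = H0 * ps w z) :
    ∀ z ∈ U,
      pt (fun y => u y / ρ y + (v y * Hy y + w y * Hz y) / (H0 * ρ y)) z +
        ps (fun y => γ * S / (γ - 1) * ρ y ^ (γ - 1) -
          (u y ^ 2 + v y ^ 2 + w y ^ 2) / 2) z = 0 := by
  intro z hz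
  have hzU : U ∈ nhds z := hU.mem_nhds hz
  have hρd : DifferentiableAt ℝ ρ z := (hρ.contDiffAt hzU).differentiableAt two_ne_zero
  have hud : DifferentiableAt ℝ u z := (hu.contDiffAt hzU).differentiableAt two_ne_zero
  have hvd : DifferentiableAt ℝ v z := (hv.contDiffAt hzU).differentiableAt two_ne_zero
  have hwd : DifferentiableAt ℝ w z := (hw.contDiffAt hzU).differentiableAt two_ne_zero
  have hHyd : DifferentiableAt ℝ Hy z := (hHy.contDiffAt hzU).differentiableAt two_ne_zero
  have hHzd : DifferentiableAt ℝ Hz z := (hHz.contDiffAt hzU).differentiableAt two_ne_zero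
  have hρne : ρ z ≠ 0 := (hρ0 z hz).ne'
  have Hρ : HasFDerivAt ρ (fderiv ℝ ρ z) z := hρd.hasFDerivAt
  have Hu : HasFDerivAt u (fderiv ℝ u z) z := hud.hasFDerivAt
  have Hv : HasFDerivAt v (fderiv ℝ v z) z := hvd.hasFDerivAt
  have Hw : HasFDerivAt w (fderiv ℝ w z) z := hwd.hasFDerivAt
  have HHy : HasFDerivAt Hy (fderiv ℝ Hy z) z := hHyd.hasFDerivAt
  have HHz : HasFDerivAt Hz (fderiv ℝ Hz z) z := hHzd.hasFDerivAt
  have Hinv : HasFDerivAt (fun y => (ρ y)⁻¹) ((-(ρ z ^ 2)⁻¹) • fderiv ℝ ρ z) z :=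
    (hasDerivAt_inv hρne).comp_hasFDerivAt z Hρ
  have Hinv2 : HasFDerivAt (fun y => (H0 * ρ y)⁻¹)
      ((-((H0 * ρ z) ^ 2)⁻¹) • (H0 • fderiv ℝ ρ z)) z :=
    (hasDerivAt_inv (mul_ne_zero hH0 hρne)).comp_hasFDerivAt z (Hρ.const_mul H0)
  -- equation 1 in scalar form
  have E1 : -(ρ z ^ 2)⁻¹ * fderiv ℝ ρ z (1, 0) = fderiv ℝ u z (0, 1) := by
    have hfe : (fun y => 1 / ρ y) = (fun y => (ρ y)⁻¹) := by
      funext y; rw [one_div]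
    have h1 := e1 z hz
    rw [pt, ps, hfe, Hinv.fderiv] at h1
    simp only [ContinuousLinearMap.smul_apply, smul_eq_mul] at h1
    linear_combination h1
  -- equations 3, 4
  have E3 : fderiv ℝ v z (1, 0) = H0 * fderiv ℝ Hy z (0, 1) := e3 z hz
  have E4 : fderiv ℝ w z (1, 0) = H0 * fderiv ℝ Hz z (0, 1) := e4 z hz
  -- equations 5, 6
  have E5 : Hy z * (-(ρ z ^ 2)⁻¹ * fderiv ℝ ρ z (1, 0)) + (ρ z)⁻¹ * fderiv ℝ Hy z (1, 0)
      = H0 * fderiv ℝ v z (0, 1) := by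
    have hfe : (fun y => Hy y / ρ y) = (fun y => Hy y * (ρ y)⁻¹) := by
      funext y; rw [div_eq_mul_inv]
    have h : HasFDerivAt (fun y => Hy y * (ρ y)⁻¹) _ z := HHy.mul Hinv
    have h5 := e5 z hz
    rw [pt, ps, hfe, h.fderiv] at h5
    simp only [ContinuousLinearMap.add_apply, ContinuousLinearMap.smul_apply,
      smul_eq_mul] at h5
    linear_combination h5
  have E6 : Hz z * (-(ρ z ^ 2)⁻¹ * fderiv ℝ ρ z (1, 0)) + (ρ z)⁻¹ * fderiv ℝ Hz z (1, 0)
      = H0 * fderiv ℝ w z (0, 1) := by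
    have hfe : (fun y => Hz y / ρ y) = (fun y => Hz y * (ρ y)⁻¹) := by
      funext y; rw [div_eq_mul_inv]
    have h : HasFDerivAt (fun y => Hz y * (ρ y)⁻¹) _ z := HHz.mul Hinv
    have h6 := e6 z hz
    rw [pt, ps, hfe, h.fderiv] at h6
    simp only [ContinuousLinearMap.add_apply, ContinuousLinearMap.smul_apply,
      smul_eq_mul] at h6
    linear_combination h6
  -- equation 2
  have E2 : fderiv ℝ u z (1, 0) = -(S * (γ * ρ z ^ (γ - 1) * fderiv ℝ ρ z (0, 1)) +
      (2 : ℝ)⁻¹ * (2 * Hy z * fderiv ℝ Hy z (0, 1) + 2 * Hz z * fderiv ℝ Hz z (0, 1))) := by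
    have heq : (fun y => p y + (Hy y ^ 2 + Hz y ^ 2) / 2) =ᶠ[nhds z]
        (fun y => S * ρ y ^ γ + (2 : ℝ)⁻¹ * (Hy y ^ 2 + Hz y ^ 2)) := by
      filter_upwards [hzU] with y hy
      rw [hpdef y hy]; ring
    have h : HasFDerivAt (fun y => S * ρ y ^ γ + (2 : ℝ)⁻¹ * (Hy y ^ 2 + Hz y ^ 2))
        (S • ((γ * ρ z ^ (γ - 1)) • fderiv ℝ ρ z) +
          (2 : ℝ)⁻¹ • (((2 * Hy z) • fderiv ℝ Hy z) + ((2 * Hz z) • fderiv ℝ Hz z))) z :=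
      ((Hρ.rpow_const (Or.inl hρne)).const_mul S).add
        (((hasFDerivAt_sq HHy).add (hasFDerivAt_sq HHz)).const_mul (2 : ℝ)⁻¹)
    have h2 := e2 z hz
    rw [pt, ps, heq.fderiv_eq, h.fderiv] at h2
    simp only [ContinuousLinearMap.add_apply, ContinuousLinearMap.smul_apply,
      smul_eq_mul] at h2
    linear_combination h2
  -- derivative of the first goal function
  have hfe1 : (fun y => u y / ρ y + (v y * Hy y + w y * Hz y) / (H0 * ρ y)) =
      (fun y => u y * (ρ y)⁻¹ + (v y * Hy y + w y * Hz y) * (H0 * ρ y)⁻¹) := by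
    funext y; rw [div_eq_mul_inv, div_eq_mul_inv]
  have hgl : HasFDerivAt
      (fun y => u y * (ρ y)⁻¹ + (v y * Hy y + w y * Hz y) * (H0 * ρ y)⁻¹)
      ((u z • ((-(ρ z ^ 2)⁻¹) • fderiv ℝ ρ z) + (ρ z)⁻¹ • fderiv ℝ u z) +
        ((v z * Hy z + w z * Hz z) • ((-((H0 * ρ z) ^ 2)⁻¹) • (H0 • fderiv ℝ ρ z)) +
          (H0 * ρ z)⁻¹ • ((v z • fderiv ℝ Hy z + Hy z • fderiv ℝ v z) +
            (w z • fderiv ℝ Hz z + Hz z • fderiv ℝ w z)))) z :=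
    (Hu.mul Hinv).add (((Hv.mul HHy).add (Hw.mul HHz)).mul Hinv2)
  -- derivative of the second goal function
  have hfe2 : (fun y => γ * S / (γ - 1) * ρ y ^ (γ - 1) -
      (u y ^ 2 + v y ^ 2 + w y ^ 2) / 2) =
      (fun y => γ * S / (γ - 1) * ρ y ^ (γ - 1) -
        (2 : ℝ)⁻¹ * (u y ^ 2 + v y ^ 2 + w y ^ 2)) := by
    funext y; ring
  have hgr : HasFDerivAt
      (fun y => γ * S / (γ - 1) * ρ y ^ (γ - 1) -
        (2 : ℝ)⁻¹ * (u y ^ 2 + v y ^ 2 + w y ^ 2))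
      ((γ * S / (γ - 1)) • (((γ - 1) * ρ z ^ (γ - 1 - 1)) • fderiv ℝ ρ z) -
        (2 : ℝ)⁻¹ • (((2 * u z) • fderiv ℝ u z + (2 * v z) • fderiv ℝ v z) +
          (2 * w z) • fderiv ℝ w z)) z :=
    ((Hρ.rpow_const (Or.inl hρne)).const_mul (γ * S / (γ - 1))).sub
      ((((hasFDerivAt_sq Hu).add (hasFDerivAt_sq Hv)).add (hasFDerivAt_sq Hw)).const_mul
        (2 : ℝ)⁻¹)
  rw [pt, ps, hfe1, hfe2, hgl.fderiv, hgr.fderiv]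
  simp only [ContinuousLinearMap.add_apply, ContinuousLinearMap.sub_apply,
    ContinuousLinearMap.smul_apply, smul_eq_mul]
  -- now pure algebra
  have hγ1 : γ - 1 ≠ 0 := sub_ne_zero.mpr hγ.ne'
  have hvs' : fderiv ℝ v z (0, 1) =
      (Hy z * (-(ρ z ^ 2)⁻¹ * fderiv ℝ ρ z (1, 0)) + (ρ z)⁻¹ * fderiv ℝ Hy z (1, 0)) / H0 := by
    rw [eq_div_iff hH0]
    linear_combination -E5
  have hws' : fderiv ℝ w z (0, 1) =
      (Hz z * (-(ρ z ^ 2)⁻¹ * fderiv ℝ ρ z (1, 0)) + (ρ z)⁻¹ * fderiv ℝ Hz z (1, 0)) / H0 := by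
    rw [eq_div_iff hH0]
    linear_combination -E6
  have hexp : ρ z ^ (γ - 1 - 1) = ρ z ^ (γ - 1) / ρ z := Real.rpow_sub_one hρne _
  rw [E2, E3, E4, ← E1, hvs', hws', hexp]
  field_simp
  ring
end
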